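/- Let G be positive with E|log G| < ∞, t > 0, and let D_t(G) be the Dirichlet mean satisfying E[(1 + λ D_t(G))^{−t}] = exp(−t E[log(1 + λ/G)]) for λ ≥ 0. Then E[(D_t(G))^{−t}] = e^{t E[log G]}, and more generally E[(λ + D_t(G))^{−t}] = exp(−t(ψ_{1/G}(λ) − E[log G])) for λ ≥ 0, where ψ_{1/G}(λ) = E[log(1+λG)]. -/

import Mathlib

open MeasureTheory Set Real Filter Topology

lemma log_one_add_le_aux {h : ℝ} (hh : 0 < h) :
    Real.log (1 + h) ≤ Real.log 2 + |Real.log h| := by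
  rcases le_or_gt h 1 with hle | hlt
  · have h1 : Real.log (1 + h) ≤ Real.log 2 := Real.log_le_log (by positivity) (by linarith)
    have h2 := abs_nonneg (Real.log h)
    linarith
  · have h1 : Real.log (1 + h) ≤ Real.log (2 * h) := Real.log_le_log (by positivity) (by linarith)
    rw [Real.log_mul two_ne_zero (by positivity)] at h1
    have h2 := le_abs_self (Real.log h)
    linarith

lemma log_one_add_le {c h : ℝ} (hc : 0 ≤ c) (hh : 0 < h) :
    Real.log (1 + c * h) ≤ Real.log (1 + c) + (Real.log 2 + |Real.log h|) := by
  have h1 : Real.log (1 + c * h) ≤ Real.log ((1 + c) * (1 + h)) := by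
    apply Real.log_le_log (by positivity)
    nlinarith
  have h2 : Real.log ((1 + c) * (1 + h)) = Real.log (1 + c) + Real.log (1 + h) :=
    Real.log_mul (by positivity) (by positivity)
  have h3 := log_one_add_le_aux hh
  linarith

lemma integrable_log_one_add {Ω : Type*} [MeasurableSpace Ω] (μ : Measure Ω)
    [IsProbabilityMeasure μ] {c : ℝ} (hc : 0 ≤ c) {H : Ω → ℝ} (hH : Measurable H)
    (hHpos : ∀ ω, 0 < H ω) (hint : Integrable (fun ω => Real.log (H ω)) μ) :
    Integrable (fun ω => Real.log (1 + c * H ω)) μ := by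
  apply Integrable.mono'
    ((integrable_const (Real.log (1 + c) + Real.log 2)).add hint.abs)
  · exact ((measurable_const.add (hH.const_mul c)).log).aestronglyMeasurable
  · filter_upwards with ω
    have hgw := hHpos ω
    have h0 : 0 ≤ Real.log (1 + c * H ω) := Real.log_nonneg (by nlinarith)
    rw [Real.norm_eq_abs, abs_of_nonneg h0]
    have := log_one_add_le hc (hHpos ω)
    simp only [Pi.add_apply]
    linarith

lemma measurable_rpow_of_pos {Ω : Type*} [MeasurableSpace Ω] {f : Ω → ℝ}
    (hf : Measurable f) (hpos : ∀ ω, 0 < f ω) (c : ℝ) :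
    Measurable fun ω => f ω ^ c := by
  have heq : (fun ω => f ω ^ c) = fun ω => Real.exp (Real.log (f ω) * c) :=
    funext fun ω => Real.rpow_def_of_pos (hpos ω) c
  rw [heq]
  exact ((hf.log).mul_const c).exp

theorem stieltjes_dirichlet_mean {Ω : Type*} [MeasurableSpace Ω] (μ : Measure Ω)
    [IsProbabilityMeasure μ] (t : ℝ) (ht : 0 < t)
    (G D : Ω → ℝ) (hG_meas : Measurable G) (hD_meas : Measurable D)
    (hG_pos : ∀ ω, 0 < G ω) (hD_pos : ∀ ω, 0 < D ω)
    (hG_int : Integrable (fun ω => Real.log (G ω)) μ)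
    (hD_char : ∀ l : ℝ, 0 ≤ l →
      (∫ ω, (1 + l * D ω) ^ (-t) ∂μ)
        = Real.exp (-(t * ∫ ω, Real.log (1 + l / G ω) ∂μ))) :
    (∫ ω, (D ω) ^ (-t) ∂μ) = Real.exp (t * ∫ ω, Real.log (G ω) ∂μ) ∧
    (∀ l : ℝ, 0 ≤ l →
      (∫ ω, (l + D ω) ^ (-t) ∂μ)
        = Real.exp (-(t * ((∫ ω, Real.log (1 + l * G ω) ∂μ) -
            ∫ ω, Real.log (G ω) ∂μ)))) := by
  set I := ∫ ω, Real.log (G ω) ∂μ with hI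
  -- Claim 2 for positive l
  have claim2pos : ∀ l : ℝ, 0 < l →
      (∫ ω, (l + D ω) ^ (-t) ∂μ)
        = Real.exp (-(t * ((∫ ω, Real.log (1 + l * G ω) ∂μ) - I))) := by
    intro l hl
    have hJint : Integrable (fun ω => Real.log (1 + l * G ω)) μ :=
      integrable_log_one_add μ hl.le hG_meas hG_pos hG_int
    have hK : (∫ ω, Real.log (1 + 1 / l / G ω) ∂μ)
        = (∫ ω, Real.log (1 + l * G ω) ∂μ) - Real.log l - I := by
      have hpt : ∀ ω, Real.log (1 + 1 / l / G ω)
          = Real.log (1 + l * G ω) - Real.log l - Real.log (G ω) := by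
        intro ω
        have hg := hG_pos ω
        have heq : 1 + 1 / l / G ω = (1 + l * G ω) / (l * G ω) := by
          field_simp
          ring
        rw [heq, Real.log_div (by positivity) (by positivity),
          Real.log_mul (ne_of_gt hl) (ne_of_gt hg)]
        ring
      simp_rw [hpt]
      have hsub : Integrable (fun ω => Real.log (1 + l * G ω) - Real.log l) μ :=
        hJint.sub (integrable_const _)
      rw [integral_sub hsub hG_int, integral_sub hJint (integrable_const _)]
      simp
      exact hI.symm
    have h1 : ∀ ω, (l + D ω) ^ (-t) = l ^ (-t) * (1 + 1 / l * D ω) ^ (-t) := by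
      intro ω
      have hd := hD_pos ω
      rw [← Real.mul_rpow hl.le (by positivity)]
      congr 1
      field_simp
    simp_rw [h1]
    rw [integral_const_mul, hD_char (1 / l) (by positivity), hK,
      Real.rpow_def_of_pos hl, ← Real.exp_add]
    congr 1
    ring
  -- auxiliary integrable bound
  have hGabsint : Integrable (fun ω => Real.log 2 + |Real.log (G ω)|) μ :=
    (integrable_const _).add hG_int.abs
  -- the approximating sequence
  set f : ℕ → Ω → ℝ := fun n ω => (1 / ((n : ℝ) + 1) + D ω) ^ (-t) with hf
  set J : ℕ → ℝ := fun n => ∫ ω, Real.log (1 + 1 / ((n : ℝ) + 1) * G ω) ∂μ with hJdef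
  have hfn_eq : ∀ n : ℕ, (∫ ω, f n ω ∂μ) = Real.exp (-(t * (J n - I))) := by
    intro n
    exact claim2pos (1 / ((n : ℝ) + 1)) (by positivity)
  -- J n → 0 by dominated convergence
  have hJ0 : Tendsto J atTop (𝓝 0) := by
    have h : Tendsto (fun n : ℕ => ∫ ω, Real.log (1 + 1 / ((n : ℝ) + 1) * G ω) ∂μ) atTop
        (𝓝 (∫ _ω, (0 : ℝ) ∂μ)) := by
      apply tendsto_integral_of_dominated_convergence
        (fun ω => Real.log 2 + |Real.log (G ω)|)
        (fun n => ((measurable_const.add (hG_meas.const_mul _)).log).aestronglyMeasurable)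
        hGabsint
      · intro n
        filter_upwards with ω
        have hg := hG_pos ω
        have han : 1 / ((n : ℝ) + 1) ≤ 1 := by
          rw [div_le_one (by positivity)]
          have : (0 : ℝ) ≤ (n : ℝ) := Nat.cast_nonneg n
          linarith
        have han0 : (0 : ℝ) ≤ 1 / ((n : ℝ) + 1) := by positivity
        have h0 : 0 ≤ Real.log (1 + 1 / ((n : ℝ) + 1) * G ω) :=
          Real.log_nonneg (by nlinarith)
        rw [Real.norm_eq_abs]
        show |Real.log (1 + 1 / ((n : ℝ) + 1) * G ω)| ≤ _
        rw [abs_of_nonneg h0]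
        have h1 : Real.log (1 + 1 / ((n : ℝ) + 1) * G ω) ≤ Real.log (1 + G ω) := by
          apply Real.log_le_log (by nlinarith)
          nlinarith
        have h2 := log_one_add_le_aux hg
        linarith
      · filter_upwards with ω
        have h1 : Tendsto (fun n : ℕ => 1 / ((n : ℝ) + 1) * G ω) atTop (𝓝 0) := by
          simpa using tendsto_one_div_add_atTop_nhds_zero_nat.mul_const (G ω)
        have h2 : Tendsto (fun n : ℕ => 1 + 1 / ((n : ℝ) + 1) * G ω) atTop (𝓝 1) := by
          simpa using h1.const_add 1
        have h3 := (Real.continuousAt_log (by norm_num : (1 : ℝ) ≠ 0)).tendsto.comp h2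
        simpa [Function.comp_def] using h3
    simpa [hJdef] using h
  -- monotonicity in n
  have hmono : ∀ ω, Monotone fun n => f n ω := by
    intro ω n m hnm
    have hd := hD_pos ω
    have hbase : 1 / ((m : ℝ) + 1) + D ω ≤ 1 / ((n : ℝ) + 1) + D ω := by
      have h1 : 1 / ((m : ℝ) + 1) ≤ 1 / ((n : ℝ) + 1) := by
        apply one_div_le_one_div_of_le (by positivity)
        have : (n : ℝ) ≤ (m : ℝ) := Nat.cast_le.mpr hnm
        linarith
      linarith
    exact Real.rpow_le_rpow_of_nonpos (by positivity) hbase (by linarith)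
  -- pointwise convergence
  have htend : ∀ ω, Tendsto (fun n => f n ω) atTop (𝓝 ((D ω) ^ (-t))) := by
    intro ω
    have h1 : Tendsto (fun n : ℕ => 1 / ((n : ℝ) + 1) + D ω) atTop (𝓝 (D ω)) := by
      simpa using tendsto_one_div_add_atTop_nhds_zero_nat.add_const (D ω)
    have h2 := (continuousAt_rpow_const (D ω) (-t) (Or.inl (hD_pos ω).ne')).tendsto.comp h1
    simpa [hf, Function.comp_def, one_div] using h2
  -- each f n is integrable (it is bounded)
  have hfmeas : ∀ n : ℕ, Measurable (f n) := by
    intro n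
    apply measurable_rpow_of_pos (measurable_const.add hD_meas)
    intro ω
    have h1 := hD_pos ω
    have h0 : (0 : ℝ) < 1 / ((n : ℝ) + 1) := by positivity
    show 0 < 1 / ((n : ℝ) + 1) + D ω
    linarith
  have hfint : ∀ n : ℕ, Integrable (f n) μ := by
    intro n
    have hpos : (0 : ℝ) < 1 / ((n : ℝ) + 1) := by positivity
    apply Integrable.mono' (integrable_const ((1 / ((n : ℝ) + 1)) ^ (-t)))
    · exact (hfmeas n).aestronglyMeasurable
    · filter_upwards with ω
      have hd := hD_pos ω
      have hb : (0 : ℝ) < 1 / ((n : ℝ) + 1) + D ω := by linarith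
      rw [Real.norm_eq_abs, abs_of_nonneg (Real.rpow_nonneg hb.le _)]
      exact Real.rpow_le_rpow_of_nonpos hpos (by linarith) (by linarith)
  have hfnonneg : ∀ n : ℕ, ∀ ω, 0 ≤ f n ω := by
    intro n ω
    have hd := hD_pos ω
    have hb : (0 : ℝ) < 1 / ((n : ℝ) + 1) + D ω := by positivity
    exact Real.rpow_nonneg hb.le _
  -- integrability of D^(-t)
  have hDmeas : Measurable fun ω => (D ω) ^ (-t) :=
    measurable_rpow_of_pos hD_meas hD_pos _
  have hDnn : ∀ ω, 0 ≤ (D ω) ^ (-t) := fun ω => Real.rpow_nonneg (hD_pos ω).le _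
  have hDint : Integrable (fun ω => (D ω) ^ (-t)) μ := by
    have hmct : Tendsto (fun n => ∫⁻ ω, ENNReal.ofReal (f n ω) ∂μ) atTop
        (𝓝 (∫⁻ ω, ENNReal.ofReal ((D ω) ^ (-t)) ∂μ)) := by
      apply lintegral_tendsto_of_tendsto_of_monotone
      · intro n
        exact ((hfmeas n).ennreal_ofReal).aemeasurable
      · filter_upwards with ω
        intro n m hnm
        exact ENNReal.ofReal_le_ofReal (hmono ω hnm)
      · filter_upwards with ω
        exact (ENNReal.continuous_ofReal.tendsto _).comp (htend ω)
    have key : (∫⁻ ω, ENNReal.ofReal ((D ω) ^ (-t)) ∂μ)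
        ≤ ENNReal.ofReal (Real.exp (t * I)) := by
      apply le_of_tendsto hmct
      apply Filter.Eventually.of_forall
      intro n
      rw [← ofReal_integral_eq_lintegral_ofReal (hfint n) (ae_of_all _ (hfnonneg n))]
      apply ENNReal.ofReal_le_ofReal
      rw [hfn_eq n]
      apply Real.exp_le_exp.mpr
      have hJn : 0 ≤ J n := by
        apply integral_nonneg
        intro ω
        have hg := hG_pos ω
        have han0 : (0 : ℝ) ≤ 1 / ((n : ℝ) + 1) := by positivity
        exact Real.log_nonneg (by nlinarith)
      nlinarith
    refine ⟨hDmeas.aestronglyMeasurable, ?_⟩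
    rw [hasFiniteIntegral_iff_ofReal (ae_of_all _ hDnn)]
    exact lt_of_le_of_lt key ENNReal.ofReal_lt_top
  -- take limits
  have hlim1 : Tendsto (fun n => ∫ ω, f n ω ∂μ) atTop (𝓝 (∫ ω, (D ω) ^ (-t) ∂μ)) :=
    integral_tendsto_of_tendsto_of_monotone hfint hDint (ae_of_all _ hmono) (ae_of_all _ htend)
  have hlim2 : Tendsto (fun n => ∫ ω, f n ω ∂μ) atTop (𝓝 (Real.exp (t * I))) := by
    simp_rw [hfn_eq]
    have h1 : Tendsto (fun n => -(t * (J n - I))) atTop (𝓝 (-(t * (0 - I)))) :=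
      ((hJ0.sub_const I).const_mul t).neg
    have h2 := (Real.continuous_exp.tendsto _).comp h1
    simp only [Function.comp_def] at h2
    convert h2 using 2
    ring_nf
  have claim1 : (∫ ω, (D ω) ^ (-t) ∂μ) = Real.exp (t * I) :=
    tendsto_nhds_unique hlim1 hlim2
  refine ⟨claim1, ?_⟩
  intro l hl
  rcases hl.eq_or_lt with rfl | hl'
  · simpa using claim1
  · exact claim2pos l hl'
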